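/- Let V be a finite-dimensional real vector space with a symmetric bilinear form B of signature (1, n), and fix h ∈ V with B(h,h) > 0. Let C = {x ∈ V : B(x,x) ≥ 0 and B(x,h) ≥ 0} be the closed forward light cone. Then C is self-dual: {y ∈ V : B(x,y) ≥ 0 for all x ∈ C} = C. -/

import Mathlib

private lemma lorentz_expand {V : Type*} [AddCommGroup V] [Module ℝ V]
    (n : ℕ) (B : LinearMap.BilinForm ℝ V)
    (b : Module.Basis (Fin (n + 1)) ℝ V)
    (hb : ∀ i j, B (b i) (b j) =
      if i = j then (if i = (0 : Fin (n + 1)) then 1 else -1) else 0)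
    (x y : V) :
    B x y = b.repr x 0 * b.repr y 0
      - ∑ i ∈ Finset.univ.erase 0, b.repr x i * b.repr y i := by
  have hx := b.sum_repr x
  have hy := b.sum_repr y
  have : B x y = ∑ i, ∑ j, b.repr x i * (b.repr y j * B (b i) (b j)) := by
    conv_lhs => rw [← hx, ← hy]
    simp only [map_sum, Finset.sum_apply, LinearMap.sum_apply, map_smul,
      smul_eq_mul, LinearMap.smul_apply, Finset.mul_sum]
    rw [Finset.sum_comm]
    refine Finset.sum_congr rfl fun i _ => Finset.sum_congr rfl fun j _ => ?_
    ring
  rw [this]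
  have h2 : ∀ i : Fin (n+1), ∑ j, b.repr x i * (b.repr y j * B (b i) (b j))
      = b.repr x i * b.repr y i * (if i = 0 then 1 else -1) := by
    intro i
    simp only [hb]
    rw [Finset.sum_eq_single i]
    · simp only [if_pos rfl, eq_self_iff_true, if_true]; ring
    · intro j _ hj; simp [Ne.symm hj]
    · simp
  simp only [h2]
  rw [← Finset.sum_erase_add _ _ (Finset.mem_univ (0 : Fin (n+1)))]
  rw [Finset.sum_congr rfl (fun i hi => by
    rw [if_neg (Finset.mem_erase.mp hi).1])]
  simp only [if_pos rfl, eq_self_iff_true, if_true, mul_one, mul_neg_one]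
  rw [Finset.sum_neg_distrib]
  ring

set_option maxHeartbeats 2000000 in
/-- The closed forward light cone of a symmetric bilinear form of signature
`(1, n)` on a finite-dimensional real vector space is self-dual. -/
theorem lorentz_forward_cone_self_dual {V : Type*} [AddCommGroup V] [Module ℝ V]
    (n : ℕ) (B : LinearMap.BilinForm ℝ V)
    (b : Module.Basis (Fin (n + 1)) ℝ V)
    (hb : ∀ i j, B (b i) (b j) =
      if i = j then (if i = (0 : Fin (n + 1)) then 1 else -1) else 0)
    (h : V) (hh : 0 < B h h) :
    {y : V | ∀ x ∈ {x : V | 0 ≤ B x x ∧ 0 ≤ B x h}, 0 ≤ B x y}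
      = {x : V | 0 ≤ B x x ∧ 0 ≤ B x h} := by
  classical
  set E : Finset (Fin (n+1)) := Finset.univ.erase 0 with hE
  set Q : V → V → ℝ := fun v w => ∑ i ∈ E, b.repr v i * b.repr w i with hQ
  have hexp : ∀ x y : V, B x y = b.repr x 0 * b.repr y 0 - Q x y :=
    fun x y => lorentz_expand n B b hb x y
  have Qnn : ∀ v : V, 0 ≤ Q v v :=
    fun v => Finset.sum_nonneg fun i _ => mul_self_nonneg _
  have cauchy : ∀ v w : V, Q v w * Q v w ≤ Q v v * Q w w := by
    intro v w
    have := Finset.sum_mul_sq_le_sq_mul_sq E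
      (fun i => b.repr v i) (fun i => b.repr w i)
    simpa only [pow_two] using this
  -- facts about h
  set a : ℝ := b.repr h 0 with ha
  have hQhh : Q h h < a * a := by
    have := hexp h h; rw [this] at hh; linarith
  have ha2 : 0 < a * a := lt_of_le_of_lt (Qnn h) hQhh
  have hane : a ≠ 0 := fun h0 => by simp [h0] at ha2
  -- characterization of the cone
  have hchar : ∀ x : V, (0 ≤ B x x ∧ 0 ≤ B x h) ↔
      (Q x x ≤ b.repr x 0 * b.repr x 0 ∧ 0 ≤ b.repr x 0 * a) := by
    intro x
    set t : ℝ := b.repr x 0 with ht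
    rw [hexp x x, hexp x h]
    constructor
    · rintro ⟨h1, h2⟩
      have hx1 : Q x x ≤ t * t := by linarith
      refine ⟨hx1, ?_⟩
      by_contra hneg
      push_neg at hneg
      have htne : t ≠ 0 := by
        intro h0; rw [h0] at hneg; simp at hneg
      have ht2 : 0 < t * t := mul_self_pos.mpr htne
      have hQxh : Q x h ≤ t * a := by linarith
      have hsq : (t * a) * (t * a) ≤ Q x h * Q x h := by
        have := mul_self_le_mul_self (by linarith : (0:ℝ) ≤ -(t * a))
          (by linarith : -(t * a) ≤ -(Q x h))
        nlinarith [this]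
      have hc := cauchy x h
      have hc2 : Q x x * Q h h ≤ (t * t) * Q h h :=
        mul_le_mul_of_nonneg_right hx1 (Qnn h)
      have hc3 : (t * t) * Q h h < (t * t) * (a * a) :=
        (mul_lt_mul_iff_right₀ ht2).mpr hQhh
      nlinarith
    · rintro ⟨h1, h2⟩
      have hc := cauchy x h
      have hc2 : Q x x * Q h h ≤ (t * t) * (a * a) := by
        have h1' : Q x x * Q h h ≤ (t * t) * Q h h :=
          mul_le_mul_of_nonneg_right h1 (Qnn h)
        have h2' : (t * t) * Q h h ≤ (t * t) * (a * a) :=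
          mul_le_mul_of_nonneg_left hQhh.le (by nlinarith [mul_self_nonneg t])
        linarith
      constructor
      · linarith
      · nlinarith [sq_nonneg (t * a + Q x h), sq_nonneg (t * a - Q x h)]
  ext y
  simp only [Set.mem_setOf_eq]
  set t : ℝ := b.repr y 0 with hty
  constructor
  · intro hdual
    rw [hchar y]
    -- first: 0 ≤ t * a, using the test vector a • b 0
    have key1 : 0 ≤ a * t := by
      set f : Fin (n+1) → ℝ := fun i => if i = 0 then a else 0 with hf
      set x : V := ∑ i, f i • b i with hx
      have hrep : ∀ i, b.repr x i = f i := fun i =>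
        congrFun (b.repr_sum_self f) i
      have hQx : ∀ w : V, Q x w = 0 := by
        intro w
        refine Finset.sum_eq_zero fun i hi => ?_
        rw [hrep i, hf]
        simp [(Finset.mem_erase.mp hi).1]
      have hf0 : f 0 = a := if_pos rfl
      have hmem : 0 ≤ B x x ∧ 0 ≤ B x h := by
        rw [hexp x x, hexp x h, hQx, hQx, hrep 0, hf0]
        constructor <;> nlinarith [mul_self_nonneg a]
      have := hdual x hmem
      rw [hexp x y, hQx, hrep 0, hf0] at this
      linarith
    refine ⟨?_, by linarith [key1]⟩
    -- second: Q y y ≤ t * t, using test vectors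
    set L : ℝ := Q y y with hL
    have hL0 : 0 ≤ L := Qnn y
    set r : ℝ := Real.sqrt L with hr
    have hr0 : 0 ≤ r := Real.sqrt_nonneg L
    have hr2 : r * r = L := Real.mul_self_sqrt hL0
    have key2 : ∀ s : ℝ, s * s = a * a → a * r * t - s * L ≥ 0 := by
      intro s hs
      set f : Fin (n+1) → ℝ := fun i => if i = 0 then a * r else s * b.repr y i
        with hf
      set x : V := ∑ i, f i • b i with hx
      have hrep : ∀ i, b.repr x i = f i := fun i =>
        congrFun (b.repr_sum_self f) i
      have hQxx : Q x x = (s * s) * L := by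
        rw [hQ]
        simp only [hrep]
        rw [hL, hQ, Finset.mul_sum]
        refine Finset.sum_congr rfl fun i hi => ?_
        rw [hf]; simp only [if_neg (Finset.mem_erase.mp hi).1]; ring
      have hQxy : Q x y = s * L := by
        rw [hQ]
        simp only [hrep]
        rw [hL, hQ, Finset.mul_sum]
        refine Finset.sum_congr rfl fun i hi => ?_
        rw [hf]; simp only [if_neg (Finset.mem_erase.mp hi).1]; ring
      have hf0 : f 0 = a * r := if_pos rfl
      have hmem : 0 ≤ B x x ∧ 0 ≤ B x h := by
        rw [hchar x, hrep 0, hf0]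
        constructor
        · rw [hQxx, hs]; nlinarith [hr2]
        · nlinarith [mul_self_nonneg a, hr0, mul_self_nonneg (a*r)]
      have := hdual x hmem
      rw [hexp x y, hQxy, hrep 0, hf0] at this
      linarith
    have k1 := key2 a rfl
    have k2 := key2 (-a) (by ring)
    -- deduce L ≤ t * t
    rcases lt_or_gt_of_ne hane with hneg | hpos
    · -- a < 0 : from k2, L ≤ -(r*t)
      have h1 : (-a) * L ≤ (-a) * (-(r * t)) := by nlinarith
      have h2 : L ≤ -(r * t) := le_of_mul_le_mul_left h1 (by linarith)
      nlinarith [sq_nonneg (r + t)]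
    · -- a > 0 : from k1, L ≤ r*t
      have h1 : a * L ≤ a * (r * t) := by nlinarith
      have h2 : L ≤ r * t := le_of_mul_le_mul_left h1 hpos
      nlinarith [sq_nonneg (r - t)]
  · intro hy x hx
    rw [hchar x] at hx
    rw [hchar y] at hy
    obtain ⟨hx1, hx2⟩ := hx
    obtain ⟨hy1, hy2⟩ := hy
    set u : ℝ := b.repr x 0 with hu
    rw [hexp x y]
    have hut : 0 ≤ u * t := by
      have : 0 ≤ (u * a) * (t * a) := mul_nonneg hx2 hy2
      nlinarith
    have hc := cauchy x y
    have hc2 : Q x x * Q y y ≤ (u * u) * (t * t) := by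
      have h1' : Q x x * Q y y ≤ (u * u) * Q y y :=
        mul_le_mul_of_nonneg_right hx1 (Qnn y)
      have h2' : (u * u) * Q y y ≤ (u * u) * (t * t) :=
        mul_le_mul_of_nonneg_left hy1 (mul_self_nonneg u)
      linarith
    have hsq : Q x y * Q x y ≤ (u * t) * (u * t) := by
      have hring : (u * u) * (t * t) = (u * t) * (u * t) := by ring
      linarith
    nlinarith [sq_nonneg (u * t + Q x y)]
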